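/- Let p be an odd prime, n ≥ 1, and R a commutative ring in which p·1 = 0. Let Q(R) be the group of pairs (f₁, f₂) in D = R[ε, X]/(ε², X^{p^n}) with f₁ = ε + Σ_{i=0}^{n−1} a_i X^{p^i}, f₂ = X + Σ_{i=1}^{n−1} b_i X^{p^i}, with product ((f₁,f₂),(g₁,g₂)) ↦ (f₁ + Σ_i c_i f₂^{p^i}, f₂ + Σ_i d_i f₂^{p^i}) where g₁ = ε + Σ c_i X^{p^i}, g₂ = X + Σ d_i X^{p^i}; and let G(R) be the group of classes in R[X]/(X^{p^n}) of polynomials X + Σ_{k=1}^{n−1} b_k X^{p^k} with product f·g = g∘f. Then the map β : Q(R) → G(R) sending (f₁, f₂) to the class of f₂ (viewing X + Σ b_i X^{p^i} in R[X]/(X^{p^n})) is a surjective group homomorphism. -/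

import Mathlib

open Finset

section Aux
variable {S : Type} [CommRing S] {p : ℕ}

lemma aux_frob (hp : p.Prime) (hpS : (p : S) = 0) (x y : S) :
    (x + y) ^ p = x ^ p + y ^ p := by
  rw [add_pow_prime_eq hp, hpS, zero_mul, zero_mul, zero_mul, add_zero]

lemma aux_frob_pow (hp : p.Prime) (hpS : (p : S) = 0) (x y : S) (m : ℕ) :
    (x + y) ^ p ^ m = x ^ p ^ m + y ^ p ^ m := by
  induction m with
  | zero => simp
  | succ m ih => rw [pow_succ, pow_mul, pow_mul, pow_mul, ih, aux_frob hp hpS]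

lemma aux_frob_sum (hp : p.Prime) (hpS : (p : S) = 0) {ι : Type*} (s : Finset ι)
    (f : ι → S) (m : ℕ) : (∑ i ∈ s, f i) ^ p ^ m = ∑ i ∈ s, f i ^ p ^ m := by
  classical
  induction s using Finset.induction with
  | empty => simp [zero_pow (pow_ne_zero m hp.ne_zero)]
  | insert _ _ hx ih => rw [Finset.sum_insert hx, Finset.sum_insert hx,
      aux_frob_pow hp hpS, ih]

lemma aux_tzero (hp : p.Prime) {n : ℕ} (t : S) (ht : t ^ p ^ n = 0) {k : ℕ}
    (hk : n ≤ k) : t ^ p ^ k = 0 := by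
  have : p ^ k = p ^ n * p ^ (k - n) := by rw [← pow_add]; congr 1; omega
  rw [this, pow_mul, ht, zero_pow (pow_ne_zero _ hp.ne_zero)]

lemma aux_pow_expand (hp : p.Prime) (hpS : (p : S) = 0) {n : ℕ} (t : S)
    (B : ℕ → S) (i : ℕ) :
    (t + ∑ j ∈ Ico 1 n, B j * t ^ p ^ j) ^ p ^ i
      = t ^ p ^ i + ∑ j ∈ Ico 1 n, (B j) ^ p ^ i * t ^ p ^ (i + j) := by
  rw [aux_frob_pow hp hpS, aux_frob_sum hp hpS]
  congr 1
  refine Finset.sum_congr rfl fun j _ => ?_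
  rw [mul_pow, ← pow_mul, ← pow_add]
  ring_nf

lemma aux_cross (hp : p.Prime) {n : ℕ} (t : S) (ht : t ^ p ^ n = 0)
    (G : ℕ → ℕ → S) (a : ℕ) :
    ∑ i ∈ Ico a n, ∑ j ∈ Ico 1 n, G i j * t ^ p ^ (i + j)
      = ∑ k ∈ Ico a n, (∑ i ∈ Ico a k, G i (k - i)) * t ^ p ^ k := by
  have step : ∀ i ∈ Ico a n, ∑ j ∈ Ico 1 n, G i j * t ^ p ^ (i + j)
      = ∑ k ∈ Ico (i + 1) n, G i (k - i) * t ^ p ^ k := by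
    intro i hi
    rw [mem_Ico] at hi
    have h1 : ∑ j ∈ Ico 1 n, G i j * t ^ p ^ (i + j)
        = ∑ k ∈ Ico (i + 1) (i + n), G i (k - i) * t ^ p ^ k := by
      rw [Finset.sum_Ico_eq_sum_range, Finset.sum_Ico_eq_sum_range]
      apply Finset.sum_congr (by congr 1; omega)
      intro j hj
      have e1 : i + 1 + j - i = 1 + j := by omega
      have e2 : i + (1 + j) = i + 1 + j := by omega
      rw [e1, e2]
    rw [h1, ← Finset.sum_Ico_consecutive _ (by omega : i + 1 ≤ n) (by omega : n ≤ i + n)]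
    have h2 : ∑ k ∈ Ico n (i + n), G i (k - i) * t ^ p ^ k = 0 := by
      refine Finset.sum_eq_zero fun k hk => ?_
      rw [mem_Ico] at hk
      rw [aux_tzero hp t ht hk.1, mul_zero]
    rw [h2, add_zero]
  rw [Finset.sum_congr rfl step, Finset.sum_Ico_Ico_comm']
  exact Finset.sum_congr rfl fun k _ => (Finset.sum_mul ..).symm


lemma aux_key (hp : p.Prime) (hpS : (p : S) = 0) {n : ℕ} (t : S)
    (ht : t ^ p ^ n = 0) (B D : ℕ → S) :
    (t + ∑ k ∈ Ico 1 n, B k * t ^ p ^ k)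
      + ∑ i ∈ Ico 1 n, D i * (t + ∑ k ∈ Ico 1 n, B k * t ^ p ^ k) ^ p ^ i
    = t + ∑ k ∈ Ico 1 n, (B k + D k + ∑ i ∈ Ico 1 k, D i * (B (k - i)) ^ p ^ i)
          * t ^ p ^ k := by
  have expand : ∀ i, (t + ∑ k ∈ Ico 1 n, B k * t ^ p ^ k) ^ p ^ i
      = t ^ p ^ i + ∑ j ∈ Ico 1 n, (B j) ^ p ^ i * t ^ p ^ (i + j) :=
    aux_pow_expand hp hpS t B
  simp only [expand, mul_add, Finset.mul_sum, Finset.sum_add_distrib, add_mul,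
    ← mul_assoc]
  rw [aux_cross hp t ht (fun i j => D i * (B j) ^ p ^ i) 1]
  simp only [Finset.sum_mul]
  ring

lemma aux_key1 (hp : p.Prime) (hpS : (p : S) = 0) {n : ℕ} (t u : S)
    (ht : t ^ p ^ n = 0) (A Cc B : ℕ → S) :
    (u + ∑ i ∈ range n, A i * t ^ p ^ i)
      + ∑ i ∈ range n, Cc i * (t + ∑ k ∈ Ico 1 n, B k * t ^ p ^ k) ^ p ^ i
    = u + ∑ k ∈ range n, (A k + Cc k + ∑ i ∈ range k, Cc i * (B (k - i)) ^ p ^ i)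
          * t ^ p ^ k := by
  have expand : ∀ i, (t + ∑ k ∈ Ico 1 n, B k * t ^ p ^ k) ^ p ^ i
      = t ^ p ^ i + ∑ j ∈ Ico 1 n, (B j) ^ p ^ i * t ^ p ^ (i + j) :=
    aux_pow_expand hp hpS t B
  simp only [expand, mul_add, Finset.mul_sum, Finset.sum_add_distrib, add_mul,
    ← mul_assoc, Finset.range_eq_Ico]
  rw [aux_cross hp t ht (fun i j => Cc i * (B j) ^ p ^ i) 0]
  simp only [Finset.sum_mul]
  ring

end Aux


open Polynomial

/-- Let `p` be an odd prime, `n ≥ 1`, `R` a commutative ring with `p·1 = 0`.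
Let `Q(R)` be the group of pairs `(f₁, f₂)` in `D = R[ε, X]/(ε², X^(p^n))` with
`f₁ = ε + Σ_{i=0}^{n-1} a_i X^(p^i)`, `f₂ = X + Σ_{i=1}^{n-1} b_i X^(p^i)` and product
`((f₁,f₂),(g₁,g₂)) ↦ (f₁ + Σ c_i f₂^(p^i), f₂ + Σ d_i f₂^(p^i))`, and let `G(R)` be the
group of classes in `R[X]/(X^(p^n))` of polynomials `X + Σ_{k=1}^{n-1} b_k X^(p^k)` with
product `f·g = g∘f`.  The map `β : Q(R) → G(R)` sending `(f₁, f₂)` to the class of `f₂`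
is a surjective group homomorphism. -/
theorem stmt_9 (p n : ℕ) (hp : p.Prime) (hodd : Odd p) (hn : 1 ≤ n)
    (R : Type) [CommRing R] (hpR : (p : R) = 0)
    (I : Ideal (MvPolynomial (Fin 2) R))
    (hI : I = Ideal.span {MvPolynomial.X 0 ^ 2, MvPolynomial.X 1 ^ (p ^ n)})
    (F1 F2 : (ℕ → R) → MvPolynomial (Fin 2) R)
    (hF1 : ∀ a, F1 a = MvPolynomial.X 0 +
      ∑ i ∈ Finset.range n, MvPolynomial.C (a i) * MvPolynomial.X 1 ^ (p ^ i))
    (hF2 : ∀ b, F2 b = MvPolynomial.X 1 +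
      ∑ i ∈ Finset.Ico 1 n, MvPolynomial.C (b i) * MvPolynomial.X 1 ^ (p ^ i))
    (Q : Set ((MvPolynomial (Fin 2) R ⧸ I) × (MvPolynomial (Fin 2) R ⧸ I)))
    (hQ : Q = {q | ∃ a b : ℕ → R,
      q = (Ideal.Quotient.mk I (F1 a), Ideal.Quotient.mk I (F2 b))})
    (J : Ideal (Polynomial R))
    (hJ : J = Ideal.span {(X : Polynomial R) ^ (p ^ n)})
    (f2p : (ℕ → R) → Polynomial R)
    (hf2p : ∀ b, f2p b = X + ∑ k ∈ Finset.Ico 1 n, C (b k) * X ^ (p ^ k))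
    (G : Set (Polynomial R ⧸ J))
    (hG : G = {q | ∃ b : ℕ → R, q = Ideal.Quotient.mk J (f2p b)})
    -- the product of Q(R)
    (mulQ : Q → Q → Q)
    (hmulQ : ∀ (a b c d : ℕ → R) (x y : Q),
      x.1 = (Ideal.Quotient.mk I (F1 a), Ideal.Quotient.mk I (F2 b)) →
      y.1 = (Ideal.Quotient.mk I (F1 c), Ideal.Quotient.mk I (F2 d)) →
      (mulQ x y).1 =
        (Ideal.Quotient.mk I (F1 a + ∑ i ∈ Finset.range n,
            MvPolynomial.C (c i) * (F2 b) ^ (p ^ i)),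
         Ideal.Quotient.mk I (F2 b + ∑ i ∈ Finset.Ico 1 n,
            MvPolynomial.C (d i) * (F2 b) ^ (p ^ i))))
    -- the product of G(R): f·g = g∘f
    (mulG : G → G → G)
    (hmulG : ∀ (b d : ℕ → R) (x y : G),
      x.1 = Ideal.Quotient.mk J (f2p b) → y.1 = Ideal.Quotient.mk J (f2p d) →
      (mulG x y).1 = Ideal.Quotient.mk J ((f2p d).comp (f2p b)))
    -- β sends (f₁, f₂) to the class of f₂
    (β : Q → G)
    (hβ : ∀ (a b : ℕ → R) (x : Q),
      x.1 = (Ideal.Quotient.mk I (F1 a), Ideal.Quotient.mk I (F2 b)) →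
      (β x).1 = Ideal.Quotient.mk J (f2p b)) :
    Function.Surjective β ∧ ∀ x y : Q, β (mulQ x y) = mulG (β x) (β y) := by
  classical
  set mkI := Ideal.Quotient.mk I with hmkI
  set mkJ := Ideal.Quotient.mk J with hmkJ
  -- characteristic facts
  have hpS' : ((p : ℕ) : MvPolynomial (Fin 2) R ⧸ I) = 0 := by
    rw [← map_natCast (algebraMap R (MvPolynomial (Fin 2) R ⧸ I)) p, hpR, map_zero]
  have hpT' : ((p : ℕ) : Polynomial R ⧸ J) = 0 := by
    rw [← map_natCast (algebraMap R (Polynomial R ⧸ J)) p, hpR, map_zero]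
  set t : MvPolynomial (Fin 2) R ⧸ I := mkI (MvPolynomial.X 1) with htdef
  have ht : t ^ p ^ n = 0 := by
    rw [htdef, ← map_pow, hmkI, Ideal.Quotient.eq_zero_iff_mem, hI]
    exact Ideal.subset_span (by simp)
  set s : Polynomial R ⧸ J := mkJ X with hsdef
  have hs : s ^ p ^ n = 0 := by
    rw [hsdef, ← map_pow, hmkJ, Ideal.Quotient.eq_zero_iff_mem, hJ]
    exact Ideal.subset_span (by simp)
  constructor
  · -- surjectivity
    intro g
    obtain ⟨b, hgb⟩ := (Set.ext_iff.mp hG g.1).mp g.2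
    refine ⟨⟨(mkI (F1 fun _ => 0), mkI (F2 b)),
      (Set.ext_iff.mp hQ _).mpr ⟨_, b, rfl⟩⟩, ?_⟩
    apply Subtype.ext
    rw [hβ (fun _ => 0) b _ rfl, ← hgb]
  · -- homomorphism
    intro x y
    obtain ⟨a, b, hx⟩ := (Set.ext_iff.mp hQ x.1).mp x.2
    obtain ⟨c, d, hy⟩ := (Set.ext_iff.mp hQ y.1).mp y.2
    set b' : ℕ → R := fun k => b k + d k +
      ∑ i ∈ Finset.Ico 1 k, d i * (b (k - i)) ^ p ^ i with hb'
    set a' : ℕ → R := fun k => a k + c k +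
      ∑ i ∈ Finset.range k, c i * (b (k - i)) ^ p ^ i with ha'
    have comp2 : mkI (F2 b + ∑ i ∈ Finset.Ico 1 n,
        MvPolynomial.C (d i) * (F2 b) ^ (p ^ i)) = mkI (F2 b') := by
      have := aux_key hp hpS' t ht (fun k => mkI (MvPolynomial.C (b k)))
        (fun k => mkI (MvPolynomial.C (d k)))
      simp only [hF2, hb', map_add, map_sum, map_mul, map_pow]
      simpa using this
    have comp1 : mkI (F1 a + ∑ i ∈ Finset.range n,
        MvPolynomial.C (c i) * (F2 b) ^ (p ^ i)) = mkI (F1 a') := by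
      have := aux_key1 hp hpS' t (mkI (MvPolynomial.X 0)) ht
        (fun k => mkI (MvPolynomial.C (a k))) (fun k => mkI (MvPolynomial.C (c k)))
        (fun k => mkI (MvPolynomial.C (b k)))
      simp only [hF1, hF2, ha', map_add, map_sum, map_mul, map_pow]
      simpa using this
    have hxy : (mulQ x y).1 = (mkI (F1 a'), mkI (F2 b')) := by
      rw [hmulQ a b c d x y hx hy]
      exact Prod.ext comp1 comp2
    have compG : mkJ ((f2p d).comp (f2p b)) = mkJ (f2p b') := by
      have hcomp : (f2p d).comp (f2p b)
          = f2p b + ∑ k ∈ Finset.Ico 1 n, C (d k) * (f2p b) ^ p ^ k := by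
        conv_lhs => rw [hf2p d]
        simp [add_comp, X_comp, mul_comp, C_comp, pow_comp]
      rw [hcomp]
      have := aux_key hp hpT' s hs (fun k => mkJ (C (b k)))
        (fun k => mkJ (C (d k)))
      simp only [hf2p, hb', map_add, map_sum, map_mul, map_pow]
      simpa using this
    apply Subtype.ext
    rw [hβ a' b' _ hxy, hmulG b d (β x) (β y) (hβ a b x hx) (hβ c d y hy), compG]
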